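/- Let X ∈ ℝ^{n×p} have columns x₁,…,xₚ and let y ∈ ℝⁿ be such that X and y satisfy the vertex non-cover condition. Then for every i ∈ [p] there is no θ > 0 with xᵢ + θ·(xᵢ − y) ∈ conv({x₁,…,xₚ}); equivalently, y ∉ xᵢ − T(xᵢ; conv({x₁,…,xₚ})), where T(x; S) = {w ∈ ℝⁿ : x + λw ∈ S for some λ > 0} is the cone of feasible directions. -/

import Mathlib

noncomputable section

/-- `X` (with columns `x i`) and the point `v` satisfy the vertex non-cover condition. -/
def VertexNonCover {E : Type*} [AddCommGroup E] [Module ℝ E] {p : ℕ}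
    (x : Fin p → E) (v : E) : Prop :=
  (∀ i, v ≠ x i) ∧
    Set.extremePoints ℝ (convexHull ℝ (Set.range x ∪ {v})) = Set.range x ∪ {v}

theorem stmt9 {n p : ℕ}
    (x : Fin p → EuclideanSpace ℝ (Fin n)) (y : EuclideanSpace ℝ (Fin n))
    (hvnc : VertexNonCover x y) :
    ∀ i, ¬ ∃ θ : ℝ, 0 < θ ∧ x i + θ • (x i - y) ∈ convexHull ℝ (Set.range x) := by
  intro i ⟨θ, hθ, hz⟩
  obtain ⟨hne, hext⟩ := hvnc
  set z := x i + θ • (x i - y) with hzdef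
  have hθ1 : (0:ℝ) < 1 + θ := by linarith
  have hxi_ext : x i ∈ Set.extremePoints ℝ (convexHull ℝ (Set.range x ∪ {y})) := by
    rw [hext]; exact Or.inl ⟨i, rfl⟩
  rw [mem_extremePoints] at hxi_ext
  have hyS : y ∈ convexHull ℝ (Set.range x ∪ {y}) :=
    subset_convexHull ℝ _ (Or.inr rfl)
  have hzS : z ∈ convexHull ℝ (Set.range x ∪ {y}) :=
    convexHull_mono Set.subset_union_left hz
  have hmem : x i ∈ openSegment ℝ y z := by
    refine ⟨θ / (1 + θ), 1 / (1 + θ), by positivity, by positivity, by field_simp; ring, ?_⟩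
    rw [hzdef]
    match_scalars <;> field_simp <;> ring
  exact hne i (hxi_ext.2 y hyS z hzS hmem).1
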